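/- arXiv:1902.01539 — 7 statements merged into one kernel-verified Lean document; each statement's English description precedes it below -/
import Mathlib

section
/- Let f : ℝ → ℝ be continuous on [0, ∞) and suppose f(x) tends to a finite limit L as x → ∞. Then for all real α > 0 and β > 0, the improper integral ∫₀^∞ (f(αx) − f(βx))/x dx converges (as the limit of ∫_ε^T as ε → 0⁺ and T → ∞) and equals (L − f(0)) · log(α/β). -/
open Filter MeasureTheory Topology

private lemma frullani_int (f : ℝ → ℝ) (hf : ContinuousOn f (Set.Ici 0))
    {a b : ℝ} (ha : 0 < a) (hb : 0 < b) :
    IntervalIntegrable (fun u => f u / u) MeasureTheory.volume a b := by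
  apply ContinuousOn.intervalIntegrable
  have hsub : Set.uIcc a b ⊆ Set.Ici (min a b) := by
    rw [Set.uIcc]; exact Set.Icc_subset_Ici_self
  have hpos : ∀ x ∈ Set.uIcc a b, 0 < x := fun x hx => lt_of_lt_of_le (lt_min ha hb) (hsub hx)
  exact ContinuousOn.div (hf.mono (fun x hx => le_of_lt (hpos x hx)))
    continuousOn_id (fun x hx => (hpos x hx).ne')

private lemma frullani_key (f : ℝ → ℝ) (c : ℝ) {α β : ℝ} (hα : 0 < α) (hβ : 0 < β)
    (hf : ContinuousOn f (Set.Ici 0)) (l : Filter ℝ)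
    (hl : ∀ᶠ s in l, 0 < s)
    (hsmall : ∀ δ : ℝ, 0 < δ → ∀ᶠ s in l, ∀ u ∈ Set.uIcc (β * s) (α * s), |f u - c| ≤ δ) :
    Tendsto (fun s => ∫ u in β * s..α * s, f u / u) l (𝓝 (c * Real.log (α / β))) := by
  rw [Metric.tendsto_nhds]
  intro δ hδ
  set K := |Real.log (α / β)| with hK
  have hK0 : 0 ≤ K := abs_nonneg _
  set δ' := δ / (K + 1) with hδ'
  have hδ'0 : 0 < δ' := div_pos hδ (by linarith)
  filter_upwards [hl, hsmall δ' hδ'0] with s hs hbound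
  have hαs : 0 < α * s := mul_pos hα hs
  have hβs : 0 < β * s := mul_pos hβ hs
  have hlogeq : Real.log (α * s / (β * s)) = Real.log (α / β) := by
    congr 1
    field_simp
  have hint : IntervalIntegrable (fun u => f u / u) MeasureTheory.volume (β * s) (α * s) :=
    frullani_int f hf hβs hαs
  have hintc : IntervalIntegrable (fun u => c / u) MeasureTheory.volume (β * s) (α * s) :=
    frullani_int (fun _ => c) continuousOn_const hβs hαs
  have hceq : ∫ u in β * s..α * s, c / u = c * Real.log (α / β) := by
    have heq : (fun u : ℝ => c / u) = fun u => c * u⁻¹ := funext fun u => div_eq_mul_inv c u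
    rw [heq, intervalIntegral.integral_const_mul, integral_inv_of_pos hβs hαs, hlogeq]
  have hsplit : (∫ u in β * s..α * s, f u / u) - c * Real.log (α / β)
      = ∫ u in β * s..α * s, (f u - c) / u := by
    rw [← hceq, ← intervalIntegral.integral_sub hint hintc]
    simp [sub_div]
  rw [Real.dist_eq, hsplit]
  have hintb : IntervalIntegrable (fun u => δ' / u) MeasureTheory.volume (β * s) (α * s) :=
    frullani_int (fun _ => δ') continuousOn_const hβs hαs
  have hnorm : |∫ u in β * s..α * s, (f u - c) / u| ≤ |∫ u in β * s..α * s, δ' / u| := by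
    rw [← Real.norm_eq_abs (∫ u in β * s..α * s, (f u - c) / u)]
    apply intervalIntegral.norm_integral_le_abs_of_norm_le _ hintb
    filter_upwards [MeasureTheory.ae_restrict_mem measurableSet_uIoc] with t ht
    have ht' : t ∈ Set.uIcc (β * s) (α * s) := Set.uIoc_subset_uIcc ht
    have ht0 : 0 < t := by
      have hsub : Set.uIcc (β * s) (α * s) ⊆ Set.Ici (min (β * s) (α * s)) := by
        rw [Set.uIcc]; exact Set.Icc_subset_Ici_self
      exact lt_of_lt_of_le (lt_min hβs hαs) (hsub ht')
    rw [Real.norm_eq_abs, abs_div, abs_of_pos ht0]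
    exact div_le_div_of_nonneg_right (hbound t ht') ht0.le
  have hb2 : |∫ u in β * s..α * s, δ' / u| = δ' * K := by
    have : ∫ u in β * s..α * s, δ' / u = δ' * Real.log (α / β) := by
      have heq : (fun u : ℝ => δ' / u) = fun u => δ' * u⁻¹ := funext fun u => div_eq_mul_inv δ' u
      rw [heq, intervalIntegral.integral_const_mul, integral_inv_of_pos hβs hαs, hlogeq]
    rw [this, abs_mul, abs_of_pos hδ'0, hK]
  calc |∫ u in β * s..α * s, (f u - c) / u| ≤ δ' * K := hnorm.trans_eq hb2
    _ < δ := by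
        rw [hδ']
        rw [div_mul_eq_mul_div, div_lt_iff₀ (by linarith)]
        nlinarith

/-- Cauchy–Frullani integral: if `f` is continuous on `[0, ∞)` and tends to `L` at `∞`,
then `∫₀^∞ (f (α x) - f (β x)) / x dx` (as an improper integral, the limit of the
integrals over `[ε, T]` as `ε → 0⁺` and `T → ∞`) converges to `(L - f 0) * log (α / β)`. -/
theorem frullani_integral (f : ℝ → ℝ) (L : ℝ)
    (hf : ContinuousOn f (Set.Ici 0))
    (hlim : Tendsto f atTop (𝓝 L))
    (α β : ℝ) (hα : 0 < α) (hβ : 0 < β) :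
    Tendsto (fun p : ℝ × ℝ => ∫ x in p.1..p.2, (f (α * x) - f (β * x)) / x)
      ((𝓝[>] (0 : ℝ)) ×ˢ atTop)
      (𝓝 ((L - f 0) * Real.log (α / β))) := by
  have hm : 0 < min α β := lt_min hα hβ
  have hM : 0 < max α β := lt_of_lt_of_le hα (le_max_left _ _)
  -- key limit at ∞
  have keyA : Tendsto (fun T => ∫ u in β * T..α * T, f u / u) atTop
      (𝓝 (L * Real.log (α / β))) := by
    apply frullani_key f L hα hβ hf
    · exact eventually_gt_atTop 0
    · intro δ hδ
      have := (hlim.eventually (Metric.closedBall_mem_nhds L hδ)).exists_forall_of_atTop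
      obtain ⟨R, hR⟩ := this
      filter_upwards [eventually_ge_atTop (max 0 (R / min α β))] with s hs u hu
      have hs0 : 0 ≤ s := le_trans (le_max_left _ _) hs
      have hu' : min α β * s ≤ u := by
        have : min (β * s) (α * s) ≤ u := by
          have hsub : Set.uIcc (β * s) (α * s) ⊆ Set.Ici (min (β * s) (α * s)) := by
            rw [Set.uIcc]; exact Set.Icc_subset_Ici_self
          exact hsub hu
        calc min α β * s ≤ min (β * s) (α * s) := by
              rcases min_cases (β * s) (α * s) with ⟨h, _⟩ | ⟨h, _⟩ <;> rw [h] <;>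
                [exact mul_le_mul_of_nonneg_right (min_le_right _ _) hs0;
                 exact mul_le_mul_of_nonneg_right (min_le_left _ _) hs0]
          _ ≤ u := this
      have hRu : R ≤ u := by
        have : R / min α β ≤ s := le_trans (le_max_right _ _) hs
        calc R = R / min α β * min α β := by field_simp
          _ ≤ s * min α β := mul_le_mul_of_nonneg_right this hm.le
          _ = min α β * s := mul_comm _ _
          _ ≤ u := hu'
      have := hR u hRu
      rw [Real.dist_eq] at this
      exact this
  -- key limit at 0
  have keyB : Tendsto (fun ε => ∫ u in β * ε..α * ε, f u / u) (𝓝[>] (0:ℝ))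
      (𝓝 (f 0 * Real.log (α / β))) := by
    apply frullani_key f (f 0) hα hβ hf
    · exact self_mem_nhdsWithin
    · intro δ hδ
      have hc : Tendsto f (𝓝[Set.Ici 0] 0) (𝓝 (f 0)) := hf 0 Set.self_mem_Ici
      have := hc.eventually (Metric.closedBall_mem_nhds (f 0) hδ)
      rw [eventually_nhdsWithin_iff, Metric.eventually_nhds_iff] at this
      obtain ⟨r, hr, hball⟩ := this
      have : ∀ᶠ ε in 𝓝[>] (0:ℝ), ε < r / max α β := by
        apply eventually_nhdsWithin_of_eventually_nhds
        exact eventually_lt_nhds (div_pos hr hM)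
      filter_upwards [this, self_mem_nhdsWithin] with ε hε hε0 u hu
      have hε0' : (0:ℝ) < ε := hε0
      have hu0 : 0 < u := by
        have hsub : Set.uIcc (β * ε) (α * ε) ⊆ Set.Ici (min (β * ε) (α * ε)) := by
          rw [Set.uIcc]; exact Set.Icc_subset_Ici_self
        exact lt_of_lt_of_le (lt_min (mul_pos hβ hε0') (mul_pos hα hε0')) (hsub hu)
      have huM : u ≤ max α β * ε := by
        have hsub : Set.uIcc (β * ε) (α * ε) ⊆ Set.Iic (max (β * ε) (α * ε)) := by
          rw [Set.uIcc]; exact Set.Icc_subset_Iic_self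
        calc u ≤ max (β * ε) (α * ε) := hsub hu
          _ ≤ max α β * ε := by
              rcases max_cases (β * ε) (α * ε) with ⟨h, _⟩ | ⟨h, _⟩ <;> rw [h] <;>
                [exact mul_le_mul_of_nonneg_right (le_max_right _ _) hε0'.le;
                 exact mul_le_mul_of_nonneg_right (le_max_left _ _) hε0'.le]
      have hur : |u - 0| < r := by
        rw [sub_zero, abs_of_pos hu0]
        calc u ≤ max α β * ε := huM
          _ < max α β * (r / max α β) := by
              exact mul_lt_mul_of_pos_left hε hM
          _ = r := by field_simp
      have := hball hur hu0.le
      rw [Real.dist_eq] at this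
      exact this
  -- combined tendsto
  have hcomb : Tendsto (fun p : ℝ × ℝ =>
      (∫ u in β * p.2..α * p.2, f u / u) - ∫ u in β * p.1..α * p.1, f u / u)
      ((𝓝[>] (0 : ℝ)) ×ˢ atTop)
      (𝓝 ((L - f 0) * Real.log (α / β))) := by
    have := (keyA.comp tendsto_snd).sub (keyB.comp tendsto_fst)
    rw [sub_mul]
    exact this
  -- eventual equality
  apply hcomb.congr'
  filter_upwards [(eventually_mem_nhdsWithin (s := Set.Ioi (0:ℝ))).prod_inl atTop,
    (eventually_gt_atTop (0:ℝ)).prod_inr (𝓝[>] (0:ℝ))] with p hp1 hp2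
  obtain ⟨ε, T⟩ := p
  simp only at hp1 hp2 ⊢
  have hε : (0:ℝ) < ε := hp1
  have hT : (0:ℝ) < T := hp2
  -- substitution
  have hsubα : ∫ x in ε..T, f (α * x) / x = ∫ u in α * ε..α * T, f u / u := by
    have h1 : ∀ x ∈ Set.uIcc ε T, f (α * x) / x = α * (f (α * x) / (α * x)) := by
      intro x hx
      have hx0 : 0 < x := by
        have hsub : Set.uIcc ε T ⊆ Set.Ici (min ε T) := by
          rw [Set.uIcc]; exact Set.Icc_subset_Ici_self
        exact lt_of_lt_of_le (lt_min hε hT) (hsub hx)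
      field_simp
    calc ∫ x in ε..T, f (α * x) / x
        = ∫ x in ε..T, α * (f (α * x) / (α * x)) := intervalIntegral.integral_congr h1
      _ = α • ∫ x in ε..T, f (α * x) / (α * x) := by
          rw [intervalIntegral.integral_const_mul, smul_eq_mul]
      _ = ∫ u in α * ε..α * T, f u / u :=
          intervalIntegral.smul_integral_comp_mul_left (fun u => f u / u) α
  have hsubβ : ∫ x in ε..T, f (β * x) / x = ∫ u in β * ε..β * T, f u / u := by
    have h1 : ∀ x ∈ Set.uIcc ε T, f (β * x) / x = β * (f (β * x) / (β * x)) := by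
      intro x hx
      have hx0 : 0 < x := by
        have hsub : Set.uIcc ε T ⊆ Set.Ici (min ε T) := by
          rw [Set.uIcc]; exact Set.Icc_subset_Ici_self
        exact lt_of_lt_of_le (lt_min hε hT) (hsub hx)
      field_simp
    calc ∫ x in ε..T, f (β * x) / x
        = ∫ x in ε..T, β * (f (β * x) / (β * x)) := intervalIntegral.integral_congr h1
      _ = β • ∫ x in ε..T, f (β * x) / (β * x) := by
          rw [intervalIntegral.integral_const_mul, smul_eq_mul]
      _ = ∫ u in β * ε..β * T, f u / u :=
          intervalIntegral.smul_integral_comp_mul_left (fun u => f u / u) β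
  have hintαx : IntervalIntegrable (fun x => f (α * x) / x) MeasureTheory.volume ε T := by
    apply ContinuousOn.intervalIntegrable
    have hpos : ∀ x ∈ Set.uIcc ε T, 0 < x := by
      intro x hx
      have hsub : Set.uIcc ε T ⊆ Set.Ici (min ε T) := by
        rw [Set.uIcc]; exact Set.Icc_subset_Ici_self
      exact lt_of_lt_of_le (lt_min hε hT) (hsub hx)
    exact ContinuousOn.div
      (hf.comp (continuous_const.mul continuous_id).continuousOn
        (fun x hx => (mul_pos hα (hpos x hx)).le))
      continuousOn_id (fun x hx => (hpos x hx).ne')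
  have hintβx : IntervalIntegrable (fun x => f (β * x) / x) MeasureTheory.volume ε T := by
    apply ContinuousOn.intervalIntegrable
    have hpos : ∀ x ∈ Set.uIcc ε T, 0 < x := by
      intro x hx
      have hsub : Set.uIcc ε T ⊆ Set.Ici (min ε T) := by
        rw [Set.uIcc]; exact Set.Icc_subset_Ici_self
      exact lt_of_lt_of_le (lt_min hε hT) (hsub hx)
    exact ContinuousOn.div
      (hf.comp (continuous_const.mul continuous_id).continuousOn
        (fun x hx => (mul_pos hβ (hpos x hx)).le))
      continuousOn_id (fun x hx => (hpos x hx).ne')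
  have hsplit : ∫ x in ε..T, (f (α * x) - f (β * x)) / x
      = (∫ u in α * ε..α * T, f u / u) - ∫ u in β * ε..β * T, f u / u := by
    rw [← hsubα, ← hsubβ, ← intervalIntegral.integral_sub hintαx hintβx]
    congr 1
    ext x
    rw [sub_div]
  rw [hsplit]
  -- additivity: ∫_{αε}^{αT} = ∫_{αε}^{βε} + ∫_{βε}^{βT} + ∫_{βT}^{αT}
  have i1 : IntervalIntegrable (fun u => f u / u) MeasureTheory.volume (α * ε) (β * ε) :=
    frullani_int f hf (mul_pos hα hε) (mul_pos hβ hε)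
  have i2 : IntervalIntegrable (fun u => f u / u) MeasureTheory.volume (β * ε) (β * T) :=
    frullani_int f hf (mul_pos hβ hε) (mul_pos hβ hT)
  have i3 : IntervalIntegrable (fun u => f u / u) MeasureTheory.volume (β * T) (α * T) :=
    frullani_int f hf (mul_pos hβ hT) (mul_pos hα hT)
  have e1 := intervalIntegral.integral_add_adjacent_intervals i1 i2
  have e2 := intervalIntegral.integral_add_adjacent_intervals (i1.trans i2) i3
  have e3 : ∫ u in α * ε..β * ε, f u / u = - ∫ u in β * ε..α * ε, f u / u := by
    rw [intervalIntegral.integral_symm]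
  rw [← e2, ← e1, e3]
  ring
end

section
/- Let n ≥ 1 be an integer and let f : ℝ → ℝ be n-times continuously differentiable on [0, ∞) with f(x) → L as x → ∞. Assume that for each integer k with 1 ≤ k ≤ n − 1, the function x^k · f^{(k)}(x) tends to 0 both as x → 0⁺ and as x → ∞, and that x ↦ x^{n−1} f^{(n)}(x) is integrable on (0, ∞). Then ∫₀^∞ x^{n−1} f^{(n)}(x) dx = (−1)^{n−1} (L − f(0)) · (n−1)!. -/
open Filter MeasureTheory Topology

lemma hasDerivAt_telescope (g : ℕ → ℝ → ℝ) (x : ℝ) :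
    ∀ N : ℕ, (∀ m ≤ N, HasDerivAt (g m) (g (m + 1) x) x) →
    HasDerivAt (fun y : ℝ => ∑ m ∈ Finset.range (N + 1),
        (-1 : ℝ) ^ (N - m) * (Nat.descFactorial N (N - m) : ℝ) * y ^ m * g m y)
      (x ^ N * g (N + 1) x) x := by
  intro N
  induction N with
  | zero =>
    intro h
    have h0 := h 0 le_rfl
    have heq : (fun y : ℝ => ∑ m ∈ Finset.range 1,
        (-1 : ℝ) ^ (0 - m) * (Nat.descFactorial 0 (0 - m) : ℝ) * y ^ m * g m y)
        = fun y => g 0 y := by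
      funext y; simp
    rw [heq]
    simpa using h0
  | succ N ih =>
    intro h
    have hN := ih fun m hm => h m (hm.trans (Nat.le_succ N))
    have heq : (fun y : ℝ => ∑ m ∈ Finset.range (N + 2),
        (-1 : ℝ) ^ (N + 1 - m) * (Nat.descFactorial (N + 1) (N + 1 - m) : ℝ) * y ^ m * g m y)
        = fun y => y ^ (N + 1) * g (N + 1) y -
          ((N : ℝ) + 1) * ∑ m ∈ Finset.range (N + 1),
            (-1 : ℝ) ^ (N - m) * (Nat.descFactorial N (N - m) : ℝ) * y ^ m * g m y := by
      funext y
      rw [Finset.sum_range_succ]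
      have hterm : ∀ m ∈ Finset.range (N + 1),
          (-1 : ℝ) ^ (N + 1 - m) * (Nat.descFactorial (N + 1) (N + 1 - m) : ℝ) * y ^ m * g m y
          = -(((N : ℝ) + 1) *
            ((-1 : ℝ) ^ (N - m) * (Nat.descFactorial N (N - m) : ℝ) * y ^ m * g m y)) := by
        intro m hm
        have hm' : m ≤ N := Nat.lt_succ_iff.mp (Finset.mem_range.mp hm)
        have h1 : N + 1 - m = (N - m) + 1 := by omega
        rw [h1, Nat.succ_descFactorial_succ]
        push_cast
        ring
      rw [Finset.sum_congr rfl hterm, Finset.sum_neg_distrib, ← Finset.mul_sum]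
      simp only [Nat.sub_self, pow_zero, Nat.descFactorial_zero, Nat.cast_one, one_mul]
      ring
    rw [heq]
    have h1 : HasDerivAt (fun y : ℝ => y ^ (N + 1) * g (N + 1) y)
        (((N : ℝ) + 1) * x ^ N * g (N + 1) x + x ^ (N + 1) * g (N + 2) x) x := by
      have := (hasDerivAt_pow (N + 1) x).fun_mul (h (N + 1) le_rfl)
      refine this.congr_deriv ?_
      push_cast
      ring
    have h2 := h1.fun_sub (hN.const_mul ((N : ℝ) + 1))
    refine h2.congr_deriv ?_
    ring

/-- The paper's main integral formula (Lemma 2): if `f` is `n`-times continuously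
differentiable on `[0, ∞)`, tends to `L` at `∞`, `x^k f^(k)(x) → 0` as `x → 0⁺` and
as `x → ∞` for `1 ≤ k ≤ n - 1`, and `x^(n-1) f^(n)(x)` is integrable on `(0, ∞)`, then
`∫₀^∞ x^(n-1) f^(n)(x) dx = (-1)^(n-1) (L - f 0) (n-1)!`. -/
theorem integral_rpow_iteratedDeriv (n : ℕ) (hn : 1 ≤ n) (f : ℝ → ℝ) (L : ℝ)
    (hf : ContDiffOn ℝ n f (Set.Ici 0))
    (hlim : Tendsto f atTop (𝓝 L))
    (hzero : ∀ k : ℕ, 1 ≤ k → k ≤ n - 1 →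
      Tendsto (fun x : ℝ => x ^ k * iteratedDerivWithin k f (Set.Ici 0) x) (𝓝[>] 0) (𝓝 0) ∧
      Tendsto (fun x : ℝ => x ^ k * iteratedDerivWithin k f (Set.Ici 0) x) atTop (𝓝 0))
    (hint : IntegrableOn (fun x : ℝ => x ^ (n - 1) * iteratedDerivWithin n f (Set.Ici 0) x)
      (Set.Ioi 0)) :
    ∫ x in Set.Ioi (0 : ℝ), x ^ (n - 1) * iteratedDerivWithin n f (Set.Ici 0) x
      = (-1) ^ (n - 1) * (L - f 0) * (Nat.factorial (n - 1) : ℝ) := by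
  obtain ⟨N, rfl⟩ : ∃ N, n = N + 1 := ⟨n - 1, (Nat.succ_pred_eq_of_pos hn).symm⟩
  simp only [Nat.add_sub_cancel] at *
  set g : ℕ → ℝ → ℝ := fun m => iteratedDerivWithin m f (Set.Ici 0) with hg
  have huniq : UniqueDiffOn ℝ (Set.Ici (0 : ℝ)) := uniqueDiffOn_Ici 0
  set G : ℝ → ℝ := fun y => ∑ m ∈ Finset.range (N + 1),
      (-1 : ℝ) ^ (N - m) * (Nat.descFactorial N (N - m) : ℝ) * y ^ m * g m y with hG
  -- derivative of G on (0, ∞)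
  have hderiv : ∀ x ∈ Set.Ioi (0 : ℝ), HasDerivAt G (x ^ N * g (N + 1) x) x := by
    intro x hx
    apply hasDerivAt_telescope g x N
    intro m hm
    have hdiff : DifferentiableWithinAt ℝ (g m) (Set.Ici 0) x := by
      refine (hf.differentiableOn_iteratedDerivWithin ?_ huniq) x (Set.mem_Ici.mpr (le_of_lt hx))
      exact_mod_cast Nat.lt_succ_of_le hm
    have hmem : Set.Ici (0 : ℝ) ∈ 𝓝 x := Ici_mem_nhds hx
    have := (hdiff.hasDerivWithinAt).hasDerivAt hmem
    rwa [show derivWithin (g m) (Set.Ici 0) x = g (m + 1) x from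
      (congrFun iteratedDerivWithin_succ x).symm] at this
  -- continuity at 0
  have hcontG : ContinuousOn G (Set.Ici (0 : ℝ)) := by
    apply continuousOn_finset_sum
    intro m hm
    have hm' : m ≤ N := Nat.lt_succ_iff.mp (Finset.mem_range.mp hm)
    have : ContinuousOn (g m) (Set.Ici (0 : ℝ)) := by
      refine hf.continuousOn_iteratedDerivWithin ?_ huniq
      exact_mod_cast Nat.le_succ_of_le hm'
    exact (continuousOn_const.mul (continuousOn_pow m)).mul this
  -- limit at infinity
  have htop : Tendsto G atTop (𝓝 ((-1 : ℝ) ^ N * (Nat.factorial N : ℝ) * L)) := by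
    have : Tendsto (fun y : ℝ => ∑ m ∈ Finset.range (N + 1),
        (-1 : ℝ) ^ (N - m) * (Nat.descFactorial N (N - m) : ℝ) * y ^ m * g m y) atTop
        (𝓝 (∑ m ∈ Finset.range (N + 1),
          if m = 0 then (-1 : ℝ) ^ N * (Nat.factorial N : ℝ) * L else 0)) := by
      apply tendsto_finset_sum
      intro m hm
      have hm' : m ≤ N := Nat.lt_succ_iff.mp (Finset.mem_range.mp hm)
      rcases Nat.eq_zero_or_pos m with rfl | hmpos
      · simp only [if_pos rfl, Nat.sub_zero, Nat.descFactorial_self, pow_zero, mul_one]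
        have : Tendsto (fun y : ℝ => (-1 : ℝ) ^ N * (Nat.factorial N : ℝ) * g 0 y) atTop
            (𝓝 ((-1 : ℝ) ^ N * (Nat.factorial N : ℝ) * L)) := by
          apply Tendsto.const_mul
          have : g 0 = f := iteratedDerivWithin_zero
          rw [this]; exact hlim
        refine this.congr fun y => by ring
      · simp only [if_neg hmpos.ne']
        have h2 := (hzero m hmpos hm').2.const_mul ((-1 : ℝ) ^ (N - m) * (Nat.descFactorial N (N - m) : ℝ))
        rw [mul_zero] at h2
        refine h2.congr fun y => by ring
    simpa using this
  -- value at 0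
  have hG0 : G 0 = (-1 : ℝ) ^ N * (Nat.factorial N : ℝ) * f 0 := by
    simp only [hG]
    rw [Finset.sum_eq_single 0]
    · simp [hg, iteratedDerivWithin_zero, Nat.descFactorial_self]
    · intro m hm hm0
      simp [zero_pow hm0]
    · intro h; simp at h
  have key := integral_Ioi_of_hasDerivAt_of_tendsto
    (hcontG.continuousWithinAt (Set.self_mem_Ici)) hderiv hint htop
  rw [key, hG0]
  ring
end

section
/- Let n ≥ 1 be an integer, α > 0 a real number, and let f : ℝ → ℝ be n-times continuously differentiable on [0, ∞) with f(x) → L as x → ∞. Assume that for each integer k with 1 ≤ k ≤ n − 1, the function x^k · f^{(k)}(x) tends to 0 both as x → 0⁺ and as x → ∞, and that x ↦ x^{n−1} f^{(n)}(x) is integrable on (0, ∞). Then ∫₀^∞ x^{n−1} f^{(n)}(α x) dx = (−1)^{n−1} (L − f(0)) · (n−1)! / α^n. -/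
open Filter MeasureTheory Topology

/-- Scaled form of the paper's main integral formula:
`∫₀^∞ x^(n-1) f^(n)(α x) dx = (-1)^(n-1) (L - f 0) (n-1)! / α^n`. -/
theorem integral_rpow_iteratedDeriv_scaled (n : ℕ) (hn : 1 ≤ n) (α : ℝ) (hα : 0 < α)
    (f : ℝ → ℝ) (L : ℝ)
    (hf : ContDiffOn ℝ n f (Set.Ici 0))
    (hlim : Tendsto f atTop (𝓝 L))
    (hzero : ∀ k : ℕ, 1 ≤ k → k ≤ n - 1 →
      Tendsto (fun x : ℝ => x ^ k * iteratedDerivWithin k f (Set.Ici 0) x) (𝓝[>] 0) (𝓝 0) ∧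
      Tendsto (fun x : ℝ => x ^ k * iteratedDerivWithin k f (Set.Ici 0) x) atTop (𝓝 0))
    (hint : IntegrableOn (fun x : ℝ => x ^ (n - 1) * iteratedDerivWithin n f (Set.Ici 0) x)
      (Set.Ioi 0)) :
    ∫ x in Set.Ioi (0 : ℝ), x ^ (n - 1) * iteratedDerivWithin n f (Set.Ici 0) (α * x)
      = (-1) ^ (n - 1) * (L - f 0) * (Nat.factorial (n - 1) : ℝ) / α ^ n := by
  have hus : UniqueDiffOn ℝ (Set.Ici (0:ℝ)) := uniqueDiffOn_Ici 0
  set D : ℕ → ℝ → ℝ := fun k => iteratedDerivWithin k f (Set.Ici 0) with hD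
  set c : ℕ → ℝ := fun k =>
    (-1:ℝ)^(n-1) * (-1)^k * (Nat.factorial (n-1) : ℝ) / (Nat.factorial k : ℝ) with hc
  set F : ℝ → ℝ := fun x => ∑ k ∈ Finset.range n, c k * (x^k * D k x) with hF
  -- derivatives of iterated derivatives at interior points
  have hderivD : ∀ k, k < n → ∀ x : ℝ, 0 < x → HasDerivAt (D k) (D (k+1) x) x := by
    intro k hk x hx
    have h1 : DifferentiableWithinAt ℝ (D k) (Set.Ici 0) x :=
      (hf.differentiableOn_iteratedDerivWithin (by exact_mod_cast hk) hus) x (le_of_lt hx)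
    have h2 := h1.hasDerivWithinAt
    have h3 : derivWithin (D k) (Set.Ici 0) x = D (k+1) x :=
      (congrFun iteratedDerivWithin_succ x).symm
    rw [h3] at h2
    exact h2.hasDerivAt (Ici_mem_nhds hx)
  -- derivative of F
  have hderivF : ∀ x : ℝ, 0 < x → HasDerivAt F (x^(n-1) * D n x) x := by
    intro x hx
    set v : ℕ → ℝ := fun k => match k with
      | 0 => 0
      | k+1 => c k * (x^k * D (k+1) x) with hv
    have hterm : ∀ k ∈ Finset.range n,
        HasDerivAt (fun y => c k * (y^k * D k y)) (v (k+1) - v k) x := by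
      intro k hk
      rw [Finset.mem_range] at hk
      have h1 := ((hasDerivAt_pow k x).mul (hderivD k hk x hx)).const_mul (c k)
      have h2 : c k * ((k:ℝ) * x ^ (k-1) * D k x + x ^ k * D (k+1) x) = v (k+1) - v k := by
        match k with
        | 0 => simp [hv]
        | j+1 =>
          have hgoal : v (j+1+1) - v (j+1)
              = c (j+1) * (x^(j+1) * D (j+2) x) - c j * (x^j * D (j+1) x) := rfl
          rw [hgoal]
          have hfj : (Nat.factorial j : ℝ) ≠ 0 := by
            exact_mod_cast Nat.factorial_ne_zero j
          have hfj1 : (Nat.factorial (j+1) : ℝ) ≠ 0 := by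
            exact_mod_cast Nat.factorial_ne_zero (j+1)
          have hcc : c (j+1) * ((j:ℝ)+1) = - c j := by
            simp only [hc]
            rw [Nat.factorial_succ]
            push_cast
            field_simp
            ring
          have hjj : j + 1 - 1 = j := rfl
          rw [hjj]
          push_cast
          linear_combination (x^j * D (j+1) x) * hcc
      rw [h2] at h1
      exact h1
    have hsum := HasDerivAt.fun_sum hterm
    have htel : ∑ k ∈ Finset.range n, (v (k+1) - v k) = v n - v 0 := Finset.sum_range_sub v n
    rw [htel] at hsum
    have hvn : v n - v 0 = x^(n-1) * D n x := by
      obtain ⟨m, rfl⟩ : ∃ m, n = m + 1 := ⟨n - 1, by omega⟩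
      show c m * (x^m * D (m+1) x) - 0 = x^(m+1-1) * D (m+1) x
      have hcm : c m = 1 := by
        simp only [hc]
        have : m + 1 - 1 = m := by omega
        rw [this, ← pow_add]
        rw [Even.neg_one_pow ⟨m, rfl⟩]
        field_simp
      rw [hcm]
      simp
    rw [hvn] at hsum
    exact hsum
  -- continuity of F on Ici 0
  have hcontF : ContinuousOn F (Set.Ici 0) := by
    apply continuousOn_finset_sum
    intro k hk
    rw [Finset.mem_range] at hk
    exact continuousOn_const.mul ((continuousOn_id.pow k).mul
      (hf.continuousOn_iteratedDerivWithin (by exact_mod_cast hk.le) hus))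
  -- limit of F at infinity
  have hlimF : Tendsto F atTop (𝓝 (c 0 * L)) := by
    have : Tendsto F atTop (𝓝 (∑ k ∈ Finset.range n, if 0 = k then c 0 * L else 0)) := by
      apply tendsto_finset_sum
      intro k hk
      rw [Finset.mem_range] at hk
      match k with
      | 0 =>
        simp only [if_pos rfl]
        have : (fun x : ℝ => c 0 * (x^0 * D 0 x)) = fun x => c 0 * f x := by
          funext x
          simp [hD, iteratedDerivWithin_zero]
        rw [this]
        exact hlim.const_mul (c 0)
      | j+1 =>
        simp only [Nat.succ_ne_zero, if_neg (by omega : ¬ (0 = j+1))]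
        have h0 := (hzero (j+1) (by omega) (by omega)).2
        have := h0.const_mul (c (j+1))
        rw [mul_zero] at this
        exact this.congr (fun x => by ring)
    rwa [Finset.sum_ite_eq (Finset.range n) 0 (fun _ => c 0 * L),
      if_pos (Finset.mem_range.mpr (by omega))] at this
  -- value of F at 0
  have hF0 : F 0 = c 0 * f 0 := by
    show ∑ k ∈ Finset.range n, c k * ((0:ℝ)^k * D k 0) = c 0 * f 0
    rw [Finset.sum_eq_single 0]
    · simp [hD, iteratedDerivWithin_zero]
    · intro k hk hk0
      simp [zero_pow hk0]
    · intro h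
      exact absurd (Finset.mem_range.mpr (by omega : 0 < n)) h
  -- FTC on (0, ∞)
  have hI : ∫ x in Set.Ioi (0:ℝ), x^(n-1) * D n x = c 0 * L - c 0 * f 0 := by
    rw [← hF0]
    exact integral_Ioi_of_hasDerivAt_of_tendsto (hcontF 0 Set.self_mem_Ici)
      (fun x hx => hderivF x hx) hint hlimF
  -- scaling
  have hα' : (α : ℝ) ≠ 0 := ne_of_gt hα
  have hαpow : (α^(n-1) : ℝ) ≠ 0 := pow_ne_zero _ hα'
  set g : ℝ → ℝ := fun y => y^(n-1) * D n y with hg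
  have step1 : ∫ x in Set.Ioi (0:ℝ), x ^ (n - 1) * D n (α * x)
      = ∫ x in Set.Ioi (0:ℝ), (α^(n-1))⁻¹ * g (α * x) := by
    congr 1
    funext x
    simp only [hg, mul_pow]
    field_simp
  have step2 : ∫ x in Set.Ioi (0:ℝ), (α^(n-1))⁻¹ * g (α * x)
      = (α^(n-1))⁻¹ * ∫ x in Set.Ioi (0:ℝ), g (α * x) := integral_const_mul _ _
  have step3 : ∫ x in Set.Ioi (0:ℝ), g (α * x) = α⁻¹ • ∫ y in Set.Ioi (0:ℝ), g y := by
    have := integral_comp_mul_left_Ioi g 0 hα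
    rwa [mul_zero] at this
  have hc0 : c 0 = (-1:ℝ)^(n-1) * (Nat.factorial (n-1) : ℝ) := by
    simp [hc]
  have hαn : α^(n-1) * α = α^n := by
    rw [← pow_succ]
    congr 1
    omega
  rw [step1, step2, step3, hg] at *
  rw [hI, smul_eq_mul, hc0]
  have hαnn : (α^n : ℝ) ≠ 0 := pow_ne_zero _ hα'
  field_simp
  rw [← hαn]
  ring
end

section
/- Let n ≥ 1 be an integer, let ψ : ℕ → ℝ with ψ(0) ≠ 0, and suppose the power series f(x) = ∑_{k=0}^∞ ψ(k) (−x)^k / k! converges for every real x. Assume f(x) → 0 as x → ∞, that for each integer k with 1 ≤ k ≤ n − 1 the function x^k · f^{(k)}(x) tends to 0 as x → ∞, and that x ↦ x^{n−1} ∑_{k=0}^∞ ψ(n+k)(−x)^k/k! is integrable on (0, ∞). Then ∫₀^∞ x^{n−1} ∑_{k=0}^∞ ψ(n+k) (−x)^k / k! dx = (n−1)! · ψ(0). -/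
open Filter MeasureTheory Topology


lemma rmt_coeffBound {a : ℕ → ℝ} {r : ℝ} (h : Summable fun k => a k * r ^ k) :
    ∃ C : ℝ, ∀ k, |a k| * |r| ^ k ≤ C := by
  have habs : Tendsto (fun k => |a k * r ^ k|) atTop (𝓝 0) := by
    simpa using h.tendsto_atTop_zero.abs
  obtain ⟨C, hC⟩ := habs.bddAbove_range
  exact ⟨C, fun k => by simpa [abs_mul, abs_pow] using hC (Set.mem_range_self k)⟩

lemma rmt_aux_summable : Summable fun k : ℕ => ((k : ℝ) + 1) * (1/2 : ℝ) ^ k := by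
  have h1 := summable_pow_mul_geometric_of_norm_lt_one (R := ℝ) 1 (r := 1/2) (by norm_num)
  have h2 : Summable fun k : ℕ => (1/2 : ℝ) ^ k := summable_geometric_of_lt_one (by norm_num) (by norm_num)
  simpa [pow_one, add_mul, one_mul] using h1.add h2

lemma rmt_norm_bound {a : ℕ → ℝ} (h : ∀ x : ℝ, Summable fun k => a k * x ^ k) {r : ℝ}
    (hr : 0 < r) : Summable fun k : ℕ => ((k : ℝ) + 1) * |a (k + 1)| * r ^ k := by
  obtain ⟨C, hC⟩ := rmt_coeffBound (h (2 * r))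
  have h2r : (0:ℝ) < 2 * r := by linarith
  refine Summable.of_nonneg_of_le (fun k => by positivity)
    (fun k => ?_) (rmt_aux_summable.mul_left (C / (2*r)))
  have h1 : |a (k+1)| ≤ C / (2*r)^(k+1) := by
    rw [le_div_iff₀ (by positivity)]
    simpa [abs_of_pos h2r] using hC (k+1)
  calc ((k:ℝ)+1) * |a (k+1)| * r ^ k ≤ ((k:ℝ)+1) * (C / (2*r)^(k+1)) * r^k := by
        gcongr
    _ = C / (2*r) * (((k:ℝ)+1) * (1/2)^k) := by
        field_simp [mul_pow]
        have h2k : (1/2:ℝ)^k * 2^k = 1 := by rw [← mul_pow]; norm_num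
        linear_combination (-(C * r * r ^ k * 2)) * h2k

lemma rmt_shiftSummable {a : ℕ → ℝ} (h : ∀ x : ℝ, Summable fun k => a k * x ^ k) (x : ℝ) :
    Summable fun k : ℕ => ((k : ℝ) + 1) * a (k + 1) * x ^ k := by
  rw [← summable_abs_iff]
  refine (rmt_norm_bound h (r := |x| + 1) (by positivity)).of_nonneg_of_le
    (fun k => abs_nonneg _) (fun k => ?_)
  have : |((k : ℝ) + 1) * a (k + 1) * x ^ k| = ((k:ℝ)+1) * |a (k+1)| * |x| ^ k := by
    simp [abs_mul, abs_pow, abs_of_nonneg (by positivity : (0:ℝ) ≤ (k:ℝ)+1)]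
  rw [this]
  gcongr
  linarith [abs_nonneg x]

lemma rmt_hasDerivAt {a : ℕ → ℝ} (h : ∀ x : ℝ, Summable fun k => a k * x ^ k) (x : ℝ) :
    HasDerivAt (fun y => ∑' k, a k * y ^ k)
      (∑' k : ℕ, ((k : ℝ) + 1) * a (k + 1) * x ^ k) x := by
  set R : ℝ := |x| + 1 with hRdef
  have hR : 0 < R := by positivity
  have hxR : x ∈ Metric.ball (0:ℝ) R := by
    simp [Metric.mem_ball, Real.dist_eq, hRdef]
  set u : ℕ → ℝ := fun k => (k : ℝ) * |a k| * R ^ (k - 1) with hudef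
  have hu : Summable u := by
    rw [← summable_nat_add_iff 1]
    have : (fun n : ℕ => u (n + 1)) = fun k : ℕ => ((k : ℝ) + 1) * |a (k + 1)| * R ^ k := by
      funext k; simp only [hudef, Nat.add_sub_cancel]; push_cast; ring
    rw [this]
    exact rmt_norm_bound h hR
  have hg : ∀ (k : ℕ) (y : ℝ), y ∈ Metric.ball (0:ℝ) R →
      HasDerivAt (fun z => a k * z ^ k) (a k * ((k:ℝ) * y ^ (k - 1))) y :=
    fun k y _ => (hasDerivAt_pow k y).const_mul (a k)
  have hg' : ∀ (k : ℕ) (y : ℝ), y ∈ Metric.ball (0:ℝ) R →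
      ‖a k * ((k:ℝ) * y ^ (k - 1))‖ ≤ u k := by
    intro k y hy
    have hyR : |y| ≤ R := by
      simp [Metric.mem_ball, Real.dist_eq] at hy; linarith
    have : ‖a k * ((k:ℝ) * y ^ (k - 1))‖ = (k:ℝ) * |a k| * |y| ^ (k-1) := by
      simp [Real.norm_eq_abs, abs_mul, abs_pow, Nat.abs_cast]; ring
    rw [this]
    simp only [hudef]
    gcongr
  have key := hasDerivAt_tsum_of_isPreconnected hu Metric.isOpen_ball
    (convex_ball (0:ℝ) R).isPreconnected hg hg' hxR (h x) hxR
  have hs : Summable fun k : ℕ => a k * ((k:ℝ) * x ^ (k - 1)) :=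
    Summable.of_norm_bounded hu (fun k => hg' k x hxR)
  have heq : (∑' k : ℕ, a k * ((k:ℝ) * x ^ (k - 1)))
      = ∑' k : ℕ, ((k : ℝ) + 1) * a (k + 1) * x ^ k := by
    rw [Summable.tsum_eq_zero_add hs]
    simp only [Nat.cast_zero, zero_mul, mul_zero, zero_add, Nat.cast_add, Nat.cast_one,
      Nat.add_sub_cancel]
    exact tsum_congr fun k => by ring
  rw [← heq]
  exact key


noncomputable def rmtA (ψ : ℕ → ℝ) (m k : ℕ) : ℝ := ψ (m + k) * (-1) ^ k / (Nat.factorial k : ℝ)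

noncomputable def rmtG (ψ : ℕ → ℝ) (m : ℕ) (x : ℝ) : ℝ := ∑' k : ℕ, rmtA ψ m k * x ^ k

lemma rmtA_term (ψ : ℕ → ℝ) (m k : ℕ) (x : ℝ) :
    ψ (m + k) * (-x) ^ k / (Nat.factorial k : ℝ) = rmtA ψ m k * x ^ k := by
  rw [rmtA, neg_pow]; ring

lemma rmtA_shift (ψ : ℕ → ℝ) (m k : ℕ) :
    rmtA ψ (m+1) k = -(((k:ℝ)+1) * rmtA ψ m (k+1)) := by
  unfold rmtA
  have h1 : m + (k+1) = m + 1 + k := by omega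
  have h2 : ((Nat.factorial (k+1) : ℝ)) = ((k:ℝ)+1) * (Nat.factorial k : ℝ) := by
    rw [Nat.factorial_succ]; push_cast; ring
  rw [h1, h2, pow_succ]
  have hk : ((k:ℝ)+1) ≠ 0 := by positivity
  have hfac : (Nat.factorial k : ℝ) ≠ 0 := Nat.cast_ne_zero.mpr k.factorial_ne_zero
  field_simp

section
variable {ψ : ℕ → ℝ}

lemma rmt_summable (hconv : ∀ x : ℝ, Summable fun k : ℕ => ψ k * (-x) ^ k / (Nat.factorial k : ℝ))
    (m : ℕ) (x : ℝ) : Summable fun k : ℕ => rmtA ψ m k * x ^ k := by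
  induction m generalizing x with
  | zero =>
    have : (fun k : ℕ => rmtA ψ 0 k * x ^ k)
        = fun k : ℕ => ψ k * (-x) ^ k / (Nat.factorial k : ℝ) := by
      funext k; rw [← rmtA_term ψ 0 k x, Nat.zero_add]
    rw [this]; exact hconv x
  | succ m ih =>
    have : (fun k : ℕ => rmtA ψ (m+1) k * x ^ k)
        = fun k : ℕ => -(((k:ℝ)+1) * rmtA ψ m (k+1) * x ^ k) := by
      funext k; rw [rmtA_shift]; ring
    rw [this]
    exact (rmt_shiftSummable ih x).neg

lemma rmt_deriv (hconv : ∀ x : ℝ, Summable fun k : ℕ => ψ k * (-x) ^ k / (Nat.factorial k : ℝ))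
    (m : ℕ) (x : ℝ) : HasDerivAt (rmtG ψ m) (-(rmtG ψ (m+1) x)) x := by
  have key := rmt_hasDerivAt (rmt_summable hconv m) x
  have heq : (∑' k : ℕ, ((k:ℝ)+1) * rmtA ψ m (k+1) * x ^ k) = -(rmtG ψ (m+1) x) := by
    rw [rmtG, ← tsum_neg]
    exact tsum_congr fun k => by rw [rmtA_shift]; ring
  rw [heq] at key
  exact key
end

/-- Ramanujan's Master Theorem for a positive integer exponent `n`:
`∫₀^∞ x^(n-1) ∑_k ψ(n+k) (-x)^k / k! dx = (n-1)! ψ(0)`. -/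
theorem ramanujan_master_nat (n : ℕ) (hn : 1 ≤ n) (ψ : ℕ → ℝ) (hψ0 : ψ 0 ≠ 0)
    (hconv : ∀ x : ℝ, Summable fun k : ℕ => ψ k * (-x) ^ k / (Nat.factorial k : ℝ))
    (f : ℝ → ℝ)
    (hf : ∀ x : ℝ, f x = ∑' k : ℕ, ψ k * (-x) ^ k / (Nat.factorial k : ℝ))
    (hlim : Tendsto f atTop (𝓝 0))
    (hzero : ∀ k : ℕ, 1 ≤ k → k ≤ n - 1 →
      Tendsto (fun x : ℝ => x ^ k * iteratedDeriv k f x) atTop (𝓝 0))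
    (hint : IntegrableOn
      (fun x : ℝ => x ^ (n - 1) * ∑' k : ℕ, ψ (n + k) * (-x) ^ k / (Nat.factorial k : ℝ))
      (Set.Ioi 0)) :
    ∫ x in Set.Ioi (0 : ℝ),
        x ^ (n - 1) * ∑' k : ℕ, ψ (n + k) * (-x) ^ k / (Nat.factorial k : ℝ)
      = (Nat.factorial (n - 1) : ℝ) * ψ 0 := by
  obtain ⟨m, rfl⟩ : ∃ m, n = m + 1 := ⟨n - 1, by omega⟩
  simp only [Nat.add_sub_cancel] at *
  -- f equals g 0
  have hfg : f = rmtG ψ 0 := by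
    funext x
    rw [hf x, rmtG]
    exact tsum_congr fun k => by rw [← rmtA_term ψ 0 k x, Nat.zero_add]
  -- continuity of each g
  have hcont : ∀ j, Continuous (rmtG ψ j) := fun j =>
    Differentiable.continuous (fun x => (rmt_deriv hconv j x).differentiableAt)
  -- iterated derivatives of f
  have hiter : ∀ j, iteratedDeriv j f = fun x => (-1:ℝ)^j * rmtG ψ j x := by
    intro j
    induction j with
    | zero => simpa [iteratedDeriv_zero] using hfg
    | succ j ih =>
      rw [iteratedDeriv_succ, ih]
      funext x
      have h1 : HasDerivAt (fun y => (-1:ℝ)^j * rmtG ψ j y)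
          ((-1:ℝ)^j * -(rmtG ψ (j+1) x)) x := (rmt_deriv hconv j x).const_mul _
      rw [h1.deriv, pow_succ]
      ring
  have hcont' : ∀ j, Continuous (iteratedDeriv j f) := by
    intro j; rw [hiter j]; exact continuous_const.mul (hcont j)
  have hfd : ∀ j x, HasDerivAt (iteratedDeriv j f) (iteratedDeriv (j+1) f x) x := by
    intro j x
    simp only [hiter]
    have h1 : HasDerivAt (fun y => (-1:ℝ)^j * rmtG ψ j y)
        ((-1:ℝ)^j * -(rmtG ψ (j+1) x)) x := (rmt_deriv hconv j x).const_mul _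
    convert h1 using 1
    rw [pow_succ]; ring
  -- f 0 = ψ 0
  have hf0 : f 0 = ψ 0 := by
    rw [hf 0, tsum_eq_single 0 (fun k hk => by simp [zero_pow hk])]
    simp
  -- main induction: limits of interval integrals
  have claim : ∀ j, j ≤ m →
      Tendsto (fun T : ℝ => ∫ x in (0:ℝ)..T, x ^ j * iteratedDeriv (j+1) f x) atTop
        (𝓝 ((-1:ℝ)^j * (Nat.factorial j : ℝ) * (-(ψ 0)))) := by
    intro j
    induction j with
    | zero =>
      intro _
      have hb : ∀ T : ℝ, ∫ x in (0:ℝ)..T, x ^ 0 * iteratedDeriv 1 f x = f T - f 0 := by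
        intro T
        simp only [pow_zero, one_mul]
        exact intervalIntegral.integral_eq_sub_of_hasDerivAt
          (fun x _ => by simpa [iteratedDeriv_zero] using hfd 0 x)
          ((hcont' 1).intervalIntegrable _ _)
      have ht : Tendsto (fun T => f T - f 0) atTop (𝓝 (0 - f 0)) := hlim.sub_const (f 0)
      have ht2 := Tendsto.congr (fun T => (hb T).symm) ht
      convert ht2 using 2
      rw [hf0]; norm_num
    | succ j ih =>
      intro hj
      have ihl := ih (by omega)
      have hIBP : ∀ T : ℝ, ∫ x in (0:ℝ)..T, x ^ (j+1) * iteratedDeriv (j+2) f x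
          = T ^ (j+1) * iteratedDeriv (j+1) f T
            - ((j:ℝ)+1) * ∫ x in (0:ℝ)..T, x ^ j * iteratedDeriv (j+1) f x := by
        intro T
        have := intervalIntegral.integral_mul_deriv_eq_deriv_mul
          (u := fun x : ℝ => x ^ (j+1)) (u' := fun x : ℝ => ((j:ℝ)+1) * x ^ j)
          (v := iteratedDeriv (j+1) f) (v' := iteratedDeriv (j+2) f) (a := 0) (b := T)
          (fun x _ => by simpa using hasDerivAt_pow (j+1) x)
          (fun x _ => hfd (j+1) x)
          ((continuous_const.mul (continuous_pow j)).intervalIntegrable _ _)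
          ((hcont' (j+2)).intervalIntegrable _ _)
        rw [this]
        rw [show (∫ x in (0:ℝ)..T, (((j:ℝ)+1) * x ^ j) * iteratedDeriv (j+1) f x)
            = ∫ x in (0:ℝ)..T, ((j:ℝ)+1) * (x ^ j * iteratedDeriv (j+1) f x) by
          congr 1; funext x; ring]
        rw [intervalIntegral.integral_const_mul]
        ring
      simp only [hIBP]
      have htendsto := (hzero (j+1) (by omega) (by omega)).sub (ihl.const_mul ((j:ℝ)+1))
      convert htendsto using 2
      rw [Nat.factorial_succ, pow_succ]
      push_cast
      ring
  -- rewrite the goal integrand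
  have hGoalFun : (fun x : ℝ => x ^ m * ∑' k : ℕ, ψ (m + 1 + k) * (-x) ^ k / (Nat.factorial k : ℝ))
      = fun x : ℝ => x ^ m * rmtG ψ (m+1) x := by
    funext x
    rw [rmtG]
    congr 1
    exact tsum_congr fun k => rmtA_term ψ (m+1) k x
  rw [show (fun x : ℝ => x ^ m * ∑' k : ℕ, ψ (m + 1 + k) * (-x) ^ k / (Nat.factorial k : ℝ)) =
    (fun x : ℝ => x ^ m * rmtG ψ (m+1) x) from hGoalFun] at hint ⊢
  have hsq : ((-1:ℝ))^m * (-1)^m = 1 := by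
    rw [← pow_add]; exact Even.neg_one_pow ⟨m, rfl⟩
  have hpt : ∀ x : ℝ, x ^ m * rmtG ψ (m+1) x
      = (-1:ℝ)^(m+1) * (x ^ m * iteratedDeriv (m+1) f x) := by
    intro x
    simp only [hiter]
    rw [pow_succ]
    linear_combination (-(x ^ m * rmtG ψ (m+1) x)) * hsq
  have hInt : ∀ T : ℝ, (∫ x in (0:ℝ)..T, x ^ m * rmtG ψ (m+1) x)
      = (-1:ℝ)^(m+1) * ∫ x in (0:ℝ)..T, x ^ m * iteratedDeriv (m+1) f x := by
    intro T
    simp only [hpt]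
    rw [intervalIntegral.integral_const_mul]
  have hlim2 := (claim m le_rfl).const_mul ((-1:ℝ)^(m+1))
  have hlim3 := Tendsto.congr (fun T => (hInt T).symm) hlim2
  have hioi := MeasureTheory.intervalIntegral_tendsto_integral_Ioi 0 hint tendsto_id
  have := tendsto_nhds_unique hioi hlim3
  rw [this, pow_succ]
  linear_combination ((Nat.factorial m : ℝ) * ψ 0) * hsq
end

section
/- Let n ≥ 1 be an integer. Then ∫₀^∞ x^{n−1} · (dⁿ/dxⁿ erf)(x) dx = (−1)^{n−1} · (n−1)!, where erf is the error function erf(x) = (2/√π) ∫₀^x e^{−t²} dt. -/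
open MeasureTheory Real Set Filter Topology Polynomial

private lemma hasDerivAt_pg (p : ℝ[X]) (x : ℝ) :
    HasDerivAt (fun x : ℝ => p.eval x * Real.exp (-x ^ 2))
      ((p.derivative.eval x - 2 * x * p.eval x) * Real.exp (-x ^ 2)) x := by
  have h1 : HasDerivAt (fun y : ℝ => Real.exp (-y ^ 2))
      (Real.exp (-x ^ 2) * -(2 * x)) x := by
    simpa using ((hasDerivAt_pow 2 x).neg).exp
  have h2 := (p.hasDerivAt x).mul h1
  refine h2.congr_deriv ?_
  ring

private lemma deriv_pg (p : ℝ[X]) :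
    deriv (fun x : ℝ => p.eval x * Real.exp (-x ^ 2))
      = fun x => (p.derivative - C 2 * X * p).eval x * Real.exp (-x ^ 2) := by
  funext x
  rw [(hasDerivAt_pg p x).deriv]
  simp [eval_sub, eval_mul]

private lemma integrableOn_pg (p : ℝ[X]) :
    IntegrableOn (fun x : ℝ => p.eval x * Real.exp (-x ^ 2)) (Ioi 0) := by
  induction p using Polynomial.induction_on' with
  | add p q hp hq =>
    simp only [eval_add, add_mul]
    exact hp.add hq
  | monomial n a =>
    have h := integrableOn_rpow_mul_exp_neg_mul_sq (b := 1) one_pos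
      (s := (n : ℝ)) (lt_of_lt_of_le neg_one_lt_zero (Nat.cast_nonneg n))
    simp only [rpow_natCast, neg_mul, one_mul] at h
    have h2 := h.const_mul a
    simp only [eval_monomial]
    simpa [mul_assoc, IntegrableOn] using h2

private lemma tendsto_pg (p : ℝ[X]) :
    Tendsto (fun x : ℝ => p.eval x * Real.exp (-x ^ 2)) atTop (𝓝 0) := by
  induction p using Polynomial.induction_on' with
  | add p q hp hq =>
    simpa only [eval_add, add_mul, add_zero] using hp.add hq
  | monomial n a =>
    have h := rpow_mul_exp_neg_mul_sq_isLittleO_exp_neg (b := 1) one_pos (n : ℝ)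
    have h2 : Tendsto (fun x : ℝ => Real.exp (-(1 / 2) * x)) atTop (𝓝 0) := by
      have : Tendsto (fun x : ℝ => (1 / 2 : ℝ) * x) atTop atTop :=
        Tendsto.const_mul_atTop (by norm_num) tendsto_id
      simpa only [Function.comp_def, neg_mul] using
        tendsto_exp_neg_atTop_nhds_zero.comp this
    have h3 := h.isBigO.trans_tendsto h2
    simp only [rpow_natCast, neg_mul, one_mul] at h3
    have h4 := h3.const_mul a
    simp only [mul_zero] at h4
    simp only [eval_monomial]
    simpa [mul_assoc] using h4

private lemma iter_G (k : ℕ) : ∃ p : ℝ[X],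
    iteratedDeriv k (fun x : ℝ => Real.exp (-x ^ 2))
      = fun x => p.eval x * Real.exp (-x ^ 2) := by
  induction k with
  | zero => exact ⟨1, by funext x; simp⟩
  | succ k ih =>
    obtain ⟨p, hp⟩ := ih
    exact ⟨p.derivative - C 2 * X * p, by rw [iteratedDeriv_succ, hp, deriv_pg]⟩

private lemma int_pg (m : ℕ) (r : ℝ[X]) :
    IntegrableOn (fun x : ℝ => x ^ m * (r.eval x * Real.exp (-x ^ 2))) (Ioi 0) := by
  have h := integrableOn_pg (X ^ m * r)
  simpa [eval_mul, eval_pow, mul_assoc] using h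

private lemma key (k : ℕ) :
    ∫ x in Ioi (0 : ℝ), x ^ k * iteratedDeriv k (fun x : ℝ => Real.exp (-x ^ 2)) x
      = (-1) ^ k * (Nat.factorial k : ℝ) * (Real.sqrt π / 2) := by
  induction k with
  | zero =>
    simp only [pow_zero, one_mul, iteratedDeriv_zero, Nat.factorial_zero, Nat.cast_one]
    have h := integral_gaussian_Ioi 1
    simpa using h
  | succ k ih =>
    obtain ⟨p, hp⟩ := iter_G k
    set q : ℝ[X] := p.derivative - C 2 * X * p with hqdef
    have hq : iteratedDeriv (k + 1) (fun x : ℝ => Real.exp (-x ^ 2))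
        = fun x => q.eval x * Real.exp (-x ^ 2) := by
      rw [iteratedDeriv_succ, hp, deriv_pg]
    have hF : ∀ x : ℝ, HasDerivAt
        (fun x : ℝ => x ^ (k + 1) * (p.eval x * Real.exp (-x ^ 2)))
        (((k : ℝ) + 1) * (x ^ k * (p.eval x * Real.exp (-x ^ 2)))
          + x ^ (k + 1) * (q.eval x * Real.exp (-x ^ 2))) x := by
      intro x
      have h := (hasDerivAt_pow (k + 1) x).mul (hasDerivAt_pg p x)
      refine h.congr_deriv ?_
      simp only [hqdef, eval_sub, eval_mul, eval_C, eval_X, Nat.add_sub_cancel]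
      push_cast
      ring
    have hint1 := (int_pg k p).const_mul ((k : ℝ) + 1)
    have hint2 := int_pg (k + 1) q
    have htend : Tendsto (fun x : ℝ => x ^ (k + 1) * (p.eval x * Real.exp (-x ^ 2)))
        atTop (𝓝 0) := by
      have h := tendsto_pg (X ^ (k + 1) * p)
      simpa [eval_mul, eval_pow, mul_assoc] using h
    have h0 := integral_Ioi_of_hasDerivAt_of_tendsto' (fun x _ => hF x)
      (hint1.add hint2) htend
    rw [integral_add hint1 hint2, integral_const_mul] at h0
    simp only [zero_pow (Nat.succ_ne_zero k), zero_mul, sub_zero, zero_sub, neg_zero] at h0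
    rw [hp] at ih
    simp only [hq]
    have : ∫ x in Ioi (0:ℝ), x ^ (k + 1) * (q.eval x * Real.exp (-x ^ 2))
        = -(((k : ℝ) + 1) * ((-1) ^ k * (Nat.factorial k : ℝ) * (Real.sqrt π / 2))) := by
      rw [← ih]; linarith
    rw [this, Nat.factorial_succ]
    push_cast
    ring

/-- For `n ≥ 1`, `∫₀^∞ x^(n-1) erf^(n)(x) dx = (-1)^(n-1) (n-1)!`, where
`erf x = (2/√π) ∫₀^x e^(-t²) dt` is the error function. -/
theorem integral_rpow_iteratedDeriv_erf (n : ℕ) (hn : 1 ≤ n) (erf : ℝ → ℝ)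
    (herf : ∀ x : ℝ, erf x = (2 / Real.sqrt π) * ∫ t in (0 : ℝ)..x, Real.exp (-t ^ 2)) :
    ∫ x in Set.Ioi (0 : ℝ), x ^ (n - 1) * iteratedDeriv n erf x
      = (-1) ^ (n - 1) * (Nat.factorial (n - 1) : ℝ) := by
  obtain ⟨m, rfl⟩ : ∃ m, n = m + 1 := ⟨n - 1, (Nat.succ_pred_eq_of_pos hn).symm⟩
  simp only [Nat.add_sub_cancel]
  set c : ℝ := 2 / Real.sqrt π with hc
  have herf' : erf = fun x => c * ∫ t in (0 : ℝ)..x, Real.exp (-t ^ 2) := funext herf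
  have hcont : Continuous fun t : ℝ => Real.exp (-t ^ 2) :=
    Real.continuous_exp.comp (continuous_pow 2).neg
  have hderiv : deriv erf = fun x => c * Real.exp (-x ^ 2) := by
    funext x
    rw [herf']
    have h1 : HasDerivAt (fun u : ℝ => ∫ t in (0 : ℝ)..u, Real.exp (-t ^ 2))
        (Real.exp (-x ^ 2)) x :=
      intervalIntegral.integral_hasDerivAt_right (hcont.intervalIntegrable _ _)
        (hcont.stronglyMeasurableAtFilter _ _) hcont.continuousAt
    exact (h1.const_mul c).deriv
  have hG : ContDiff ℝ ⊤ (fun x : ℝ => Real.exp (-x ^ 2)) :=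
    Real.contDiff_exp.comp ((contDiff_id.pow 2).neg)
  have hcmul : ∀ j : ℕ, iteratedDeriv j (fun x : ℝ => c * Real.exp (-x ^ 2))
      = fun x => c * iteratedDeriv j (fun x : ℝ => Real.exp (-x ^ 2)) x := by
    intro j
    induction j with
    | zero => simp
    | succ j ih =>
      funext x
      rw [iteratedDeriv_succ, ih, iteratedDeriv_succ]
      exact deriv_const_mul c
        ((hG.differentiable_iteratedDeriv j (WithTop.natCast_lt_top j)).differentiableAt)
  have hiter : iteratedDeriv (m + 1) erf
      = fun x => c * iteratedDeriv m (fun x : ℝ => Real.exp (-x ^ 2)) x := by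
    rw [iteratedDeriv_succ', hderiv, hcmul]
  rw [hiter]
  simp_rw [mul_left_comm _ c]
  rw [integral_const_mul, key m]
  have hs : Real.sqrt π ≠ 0 := ne_of_gt (Real.sqrt_pos.mpr pi_pos)
  rw [hc]
  field_simp
end

section
/- Let n ≥ 1 be an integer and define the n-th Laguerre polynomial by the Rodrigues formula L_n(x) = (e^x / n!) · (dⁿ/dxⁿ)(t ↦ tⁿ e^{−t})(x). Then ∫₀^∞ x^{n−1} · L_n(x) · e^{−x} dx = 0. -/
open MeasureTheory

open Polynomial Filter Topology in
/-- Polynomials arising from repeatedly differentiating `x ^ n * exp (-x)`. -/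
noncomputable def lagQ (n : ℕ) : ℕ → Polynomial ℝ
  | 0 => X ^ n
  | k + 1 => derivative (lagQ n k) - lagQ n k

open Polynomial Filter Topology

lemma lagQ_zero (n : ℕ) : lagQ n 0 = X ^ n := rfl

lemma lagQ_succ (n k : ℕ) : lagQ n (k + 1) = derivative (lagQ n k) - lagQ n k := rfl

lemma lag_hasDerivAt (p : Polynomial ℝ) (x : ℝ) :
    HasDerivAt (fun x : ℝ => p.eval x * Real.exp (-x))
      ((derivative p - p).eval x * Real.exp (-x)) x := by
  have h2 : HasDerivAt (fun x : ℝ => Real.exp (-x)) (-Real.exp (-x)) x := by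
    convert (hasDerivAt_neg x).exp using 1 <;> simp
  have := (p.hasDerivAt x).mul h2
  exact this.congr_deriv (by rw [eval_sub]; ring)

lemma lag_iter (n k : ℕ) (x : ℝ) :
    iteratedDeriv k (fun t : ℝ => t ^ n * Real.exp (-t)) x
      = (lagQ n k).eval x * Real.exp (-x) := by
  induction k generalizing x with
  | zero => simp [lagQ_zero]
  | succ k ih =>
    rw [iteratedDeriv_succ]
    have hfun : iteratedDeriv k (fun t : ℝ => t ^ n * Real.exp (-t))
        = fun x : ℝ => (lagQ n k).eval x * Real.exp (-x) := funext ih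
    rw [hfun, (lag_hasDerivAt (lagQ n k) x).deriv, lagQ_succ]

lemma lag_tendsto (p : Polynomial ℝ) :
    Tendsto (fun x : ℝ => p.eval x * Real.exp (-x)) atTop (𝓝 0) := by
  have := p.tendsto_div_exp_atTop
  refine this.congr fun x => ?_
  rw [Real.exp_neg, div_eq_mul_inv]

lemma lag_integrable (p : Polynomial ℝ) :
    IntegrableOn (fun x : ℝ => p.eval x * Real.exp (-x)) (Set.Ioi 0) := by
  apply integrable_of_isBigO_exp_neg (b := 1/2) (by norm_num)
  · exact (p.continuous_aeval.mul (Real.continuous_exp.comp continuous_neg)).continuousOn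
  · have h1 : Tendsto (fun x : ℝ => p.eval x * Real.exp (-(1/2) * x)) atTop (𝓝 0) := by
      have hc : Tendsto (fun x : ℝ => x / 2) atTop atTop := tendsto_id.atTop_div_const two_pos
      have := (lag_tendsto (p.comp (C 2 * X))).comp hc
      refine this.congr fun x => ?_
      simp only [Function.comp, eval_comp, eval_mul, eval_C, eval_X]
      ring_nf
    have h2 : (fun x : ℝ => p.eval x * Real.exp (-(1/2) * x)) =O[atTop] (fun _ : ℝ => (1:ℝ)) :=
      h1.isBigO_one ℝ
    have h3 := h2.mul (Asymptotics.isBigO_refl (fun x : ℝ => Real.exp (-(1/2) * x)) atTop)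
    refine (Asymptotics.IsBigO.congr' h3 ?_ ?_)
    · filter_upwards with x
      have harg : (-(1/2:ℝ)) * x + (-(1/2)) * x = -x := by ring
      rw [mul_assoc, ← Real.exp_add, harg]
    · filter_upwards with x
      rw [one_mul]

lemma lag_K (n : ℕ) (hn : 1 ≤ n) :
    ∀ k : ℕ, ∫ x in Set.Ioi (0:ℝ), (X ^ k * lagQ n (k + 1)).eval x * Real.exp (-x) = 0 := by
  intro k
  induction k with
  | zero =>
    have key := integral_Ioi_of_hasDerivAt_of_tendsto' (a := 0) (m := 0)
      (f := fun x : ℝ => ((X : Polynomial ℝ) ^ n).eval x * Real.exp (-x))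
      (f' := fun x : ℝ => (lagQ n 1).eval x * Real.exp (-x))
      (fun x _ => by
        rw [lagQ_succ, lagQ_zero]
        exact lag_hasDerivAt ((X : Polynomial ℝ) ^ n) x)
      (lag_integrable (lagQ n 1)) (lag_tendsto _)
    simp only [eval_pow, eval_X, Real.exp_zero, mul_one, zero_sub,
      zero_pow (show n ≠ 0 by omega), neg_zero] at key
    simpa using key
  | succ k ih =>
    have hpoly : derivative (X ^ (k+1) * lagQ n (k+1)) - X ^ (k+1) * lagQ n (k+1)
        = C ((k : ℝ) + 1) * (X ^ k * lagQ n (k+1)) + X ^ (k+1) * lagQ n (k+2) := by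
      rw [lagQ_succ n (k+1), derivative_mul, derivative_X_pow]
      push_cast
      ring
    have hkey : ∫ x in Set.Ioi (0:ℝ),
        (derivative (X ^ (k+1) * lagQ n (k+1)) - X ^ (k+1) * lagQ n (k+1)).eval x
          * Real.exp (-x) = 0 := by
      rw [integral_Ioi_of_hasDerivAt_of_tendsto' (m := 0)
        (fun x _ => lag_hasDerivAt (X ^ (k+1) * lagQ n (k+1)) x)
        (lag_integrable _) (lag_tendsto _)]
      simp
    rw [funext fun x => congrArg (· * Real.exp (-x)) (congrArg (eval x) hpoly)] at hkey
    have hsplit : (fun x : ℝ =>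
        (C ((k : ℝ) + 1) * (X ^ k * lagQ n (k+1)) + X ^ (k+1) * lagQ n (k+2)).eval x
          * Real.exp (-x))
        = fun x : ℝ => ((k : ℝ) + 1) * ((X ^ k * lagQ n (k+1)).eval x * Real.exp (-x))
          + (X ^ (k+1) * lagQ n (k+2)).eval x * Real.exp (-x) := by
      funext x
      simp only [eval_add, eval_mul, eval_C, eval_pow, eval_X]
      ring
    rw [hsplit, integral_add ((lag_integrable (X ^ k * lagQ n (k+1))).const_mul _)
      (lag_integrable _), integral_const_mul, ih, mul_zero, zero_add] at hkey
    exact hkey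

/-- For `n ≥ 1`, `∫₀^∞ x^(n-1) L_n(x) e^(-x) dx = 0`, where `L_n` is the `n`-th Laguerre
polynomial, given by the Rodrigues formula
`L_n(x) = (e^x / n!) (d^n/dx^n)(t ↦ t^n e^(-t))(x)`. -/
theorem integral_laguerre (n : ℕ) (hn : 1 ≤ n) (L : ℝ → ℝ)
    (hL : ∀ x : ℝ, L x = Real.exp x / (Nat.factorial n : ℝ)
      * iteratedDeriv n (fun t : ℝ => t ^ n * Real.exp (-t)) x) :
    ∫ x in Set.Ioi (0 : ℝ), x ^ (n - 1) * L x * Real.exp (-x) = 0 := by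
  obtain ⟨m, rfl⟩ : ∃ m, n = m + 1 := ⟨n - 1, (Nat.succ_pred_eq_of_pos hn).symm⟩
  have hc : ((Nat.factorial (m + 1) : ℝ)) ≠ 0 := by positivity
  have hfun : ∀ x : ℝ, x ^ (m + 1 - 1) * L x * Real.exp (-x)
      = (1 / (Nat.factorial (m + 1) : ℝ))
        * ((X ^ m * lagQ (m + 1) (m + 1)).eval x * Real.exp (-x)) := by
    intro x
    rw [hL x, lag_iter, Nat.add_sub_cancel]
    have hexp : Real.exp x * Real.exp (-x) = 1 := by
      rw [← Real.exp_add]; simp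
    simp only [eval_mul, eval_pow, eval_X]
    linear_combination (x ^ m * (lagQ (m + 1) (m + 1)).eval x * Real.exp (-x)
      / (Nat.factorial (m + 1) : ℝ)) * hexp
  rw [funext hfun, integral_const_mul, lag_K (m + 1) (by omega) m, mul_zero]
end

section
/- Let n ≥ 0 be an integer. For every real x, the n-th derivative of the function t ↦ tⁿ e^{−t} at x equals n! · e^{−x} · ∑_{k=0}^{n} (−1)^k · C(n,k) · x^k / k!, where C(n,k) is the binomial coefficient. -/
open Polynomial Finset

private lemma deriv_poly_mul_exp (q : ℝ[X]) :
    deriv (fun t : ℝ => q.eval t * Real.exp (-t))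
      = fun t : ℝ => (Polynomial.derivative q - q).eval t * Real.exp (-t) := by
  funext t
  have h1 : HasDerivAt (fun t : ℝ => Real.exp (-t)) (-Real.exp (-t)) t := by
    simpa [Function.comp_def] using (Real.hasDerivAt_exp (-t)).comp t (hasDerivAt_neg t)
  have h2 : HasDerivAt (fun t : ℝ => q.eval t * Real.exp (-t))
      ((Polynomial.derivative q).eval t * Real.exp (-t) + q.eval t * (-Real.exp (-t))) t :=
    (q.hasDerivAt t).mul h1
  rw [h2.deriv]
  simp; ring

private lemma key_iteratedDeriv (m : ℕ) (q : ℝ[X]) (x : ℝ) :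
    iteratedDeriv m (fun t : ℝ => q.eval t * Real.exp (-t)) x
      = (((Polynomial.derivative - 1 : Module.End ℝ ℝ[X]) ^ m) q).eval x * Real.exp (-x) := by
  induction m generalizing q with
  | zero => simp
  | succ m ih =>
      rw [iteratedDeriv_succ', deriv_poly_mul_exp, ih (Polynomial.derivative q - q), pow_succ']
      congr 2
      have hc : Commute ((Polynomial.derivative - 1 : Module.End ℝ ℝ[X]) ^ m)
          (Polynomial.derivative : Module.End ℝ ℝ[X]) :=
        (((Commute.refl _).sub_left (Commute.one_left _))).pow_left m
      have hce := congrFun (congrArg DFunLike.coe hc.eq) q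
      simp only [Module.End.mul_apply] at hce
      simp [Module.End.mul_apply, LinearMap.sub_apply, hce]

private lemma neg_one_pow_apply (k : ℕ) (p : ℝ[X]) :
    ((-1 : Module.End ℝ ℝ[X]) ^ k) p = ((-1 : ℝ) ^ k) • p := by
  induction k with
  | zero => simp
  | succ k ih => simp [pow_succ, Module.End.mul_apply, ih, smul_smul]

private lemma eval_pow_sub_one (n : ℕ) (x : ℝ) :
    eval x (((Polynomial.derivative - 1 : Module.End ℝ ℝ[X]) ^ n) (X ^ n))
      = (Nat.factorial n : ℝ)
        * ∑ k ∈ Finset.range (n + 1),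
            (-1) ^ k * (Nat.choose n k : ℝ) * x ^ k / (Nat.factorial k : ℝ) := by
  have hb := (Commute.neg_one_right (Polynomial.derivative : Module.End ℝ ℝ[X])).add_pow n
  rw [sub_eq_add_neg, hb]
  rw [LinearMap.sum_apply, eval_finset_sum, Finset.mul_sum,
    ← Finset.sum_range_reflect _ (n + 1)]
  refine Finset.sum_congr rfl fun m hm => ?_
  have hm' : m ≤ n := by simpa [Nat.lt_succ_iff] using Finset.mem_range.mp hm
  have h1 : n + 1 - 1 - m = n - m := by omega
  have h2 : n - (n - m) = m := by omega
  rw [h1, Module.End.mul_apply, Module.End.mul_apply, Module.End.natCast_apply,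
    neg_one_pow_apply]
  simp only [map_smul, map_nsmul, Module.End.pow_apply]
  rw [Polynomial.iterate_derivative_X_pow_eq_smul]
  simp only [eval_smul, eval_pow, eval_X, smul_eq_mul, nsmul_eq_mul, eval_mul, eval_natCast]
  rw [Nat.choose_symm hm', h2]
  have h3 : (Nat.factorial m : ℝ) * (Nat.descFactorial n (n - m) : ℝ) = Nat.factorial n := by
    have := Nat.factorial_mul_descFactorial (Nat.sub_le n m)
    rw [h2] at this
    exact_mod_cast congrArg (Nat.cast : ℕ → ℝ) this
  have hfm : (Nat.factorial m : ℝ) ≠ 0 := by positivity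
  field_simp
  linear_combination ((Nat.choose n m : ℝ) * x^m) * h3

/-- Rodrigues formula for the Laguerre polynomials: for `n ≥ 0` and every real `x`,
`(d^n/dx^n)(t ↦ t^n e^(-t))(x) = n! e^(-x) ∑_{k=0}^n (-1)^k C(n,k) x^k / k!`. -/
theorem iteratedDeriv_laguerre_rodrigues (n : ℕ) (x : ℝ) :
    iteratedDeriv n (fun t : ℝ => t ^ n * Real.exp (-t)) x
      = (Nat.factorial n : ℝ) * Real.exp (-x)
        * ∑ k ∈ Finset.range (n + 1),
            (-1) ^ k * (Nat.choose n k : ℝ) * x ^ k / (Nat.factorial k : ℝ) := by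
  have hfun : (fun t : ℝ => t ^ n * Real.exp (-t))
      = fun t : ℝ => (X ^ n : ℝ[X]).eval t * Real.exp (-t) := by
    funext t; simp
  rw [hfun, key_iteratedDeriv n (X ^ n) x, eval_pow_sub_one n x]
  ring
end
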